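/- arXiv:2401.12952 — 3 statements merged into one kernel-verified Lean document; each statement's English description precedes it below -/
import Mathlib

section
/- For matrices (or elements of a Banach algebra) Ω and C, the derivative of t ↦ exp(Ω(t)) satisfies d/dt exp(Ω(t)) = (∫_0^1 exp(x·Ω(t)) · Ω'(t) · exp((1-x)·Ω(t)) dx), i.e., (d/dt exp(Ω(t)))·exp(-Ω(t)) = ∫_0^1 exp(x·Ω(t)) · Ω'(t) · exp(-x·Ω(t)) dx. -/
open NormedSpace intervalIntegral MeasureTheory Filter Topology Set
open scoped Nat

section DuhamelAux

variable {𝔸 : Type*} [NormedRing 𝔸] [NormedAlgebra ℂ 𝔸] [CompleteSpace 𝔸]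

noncomputable local instance duhamelRatAlg : NormedAlgebra ℚ 𝔸 := NormedAlgebra.restrictScalars ℚ ℂ 𝔸

private lemma duhamel_norm_exp_le (y : 𝔸) :
    ‖exp y‖ ≤ (‖(1 : 𝔸)‖ + 1) * Real.exp ‖y‖ := by
  have : ContinuousSMul ℚ ℂ := ⟨by
    simp_rw [Rat.smul_def]
    exact (Complex.continuous_ofReal.comp (Rat.continuous_coe_real.comp continuous_fst) |>.congr
      (fun p => by simp)).mul continuous_snd⟩
  have hsum : Summable fun n : ℕ => ‖((n ! : ℂ))⁻¹ • y ^ n‖ := norm_expSeries_summable' y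
  have hsum2 : Summable fun n : ℕ => (‖(1 : 𝔸)‖ + 1) * (‖y‖ ^ n / n !) :=
    (Real.summable_pow_div_factorial ‖y‖).mul_left _
  rw [exp_eq_tsum ℂ]
  refine (norm_tsum_le_tsum_norm hsum).trans ?_
  have hrhs : (‖(1 : 𝔸)‖ + 1) * Real.exp ‖y‖
      = ∑' n : ℕ, (‖(1 : 𝔸)‖ + 1) * (‖y‖ ^ n / n !) := by
    rw [tsum_mul_left]
    congr 1
    rw [Real.exp_eq_exp_ℝ, exp_eq_tsum_div]
  rw [hrhs]
  refine Summable.tsum_le_tsum (fun n => ?_) hsum hsum2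
  have hyn : ‖y ^ n‖ ≤ (‖(1 : 𝔸)‖ + 1) * ‖y‖ ^ n := by
    cases n with
    | zero => simpa using by linarith [norm_nonneg (‖y‖ : ℝ)]
    | succ m =>
      refine (norm_pow_le' y m.succ_pos).trans ?_
      exact le_mul_of_one_le_left (by positivity) (by linarith [norm_nonneg (1 : 𝔸)])
  rw [norm_smul, norm_inv, Complex.norm_natCast]
  calc (n ! : ℝ)⁻¹ * ‖y ^ n‖ ≤ (n ! : ℝ)⁻¹ * ((‖(1 : 𝔸)‖ + 1) * ‖y‖ ^ n) :=
        mul_le_mul_of_nonneg_left hyn (by positivity)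
    _ = (‖(1 : 𝔸)‖ + 1) * (‖y‖ ^ n / n !) := by ring

private lemma duhamel_hasDerivAt_exp_smul (a : 𝔸) (x : ℝ) :
    HasDerivAt (fun u : ℝ => exp (u • a)) (exp (x • a) * a) x := by
  have h := hasDerivAt_exp_smul_const (𝕂 := ℝ) a x
  simpa using h

private lemma duhamel_exp_sub_exp (a b : 𝔸) :
    exp a - exp b
      = (∫ x in (0:ℝ)..1, exp (x • a) * (a - b) * exp ((-x) • b)) * exp b := by
  have hg : ∀ x : ℝ, HasDerivAt (fun u : ℝ => exp (u • a) * exp ((-u) • b))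
      (exp (x • a) * (a - b) * exp ((-x) • b)) x := by
    intro x
    have h1 := duhamel_hasDerivAt_exp_smul a x
    have h2 : HasDerivAt (fun u : ℝ => exp ((-u) • b))
        (-(exp ((-x) • b) * b)) x := by
      have h2' := duhamel_hasDerivAt_exp_smul (-b) x
      simpa [smul_neg, neg_smul, mul_neg] using h2'
    have h3 := h1.mul h2
    convert h3 using 1
    · rfl
    have hcomm : exp ((-x) • b) * b = b * exp ((-x) • b) :=
      (((Commute.refl b).smul_right (-x)).exp_right).eq.symm
    rw [mul_sub, sub_mul, mul_neg, hcomm]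
    noncomm_ring
  have hcont : Continuous fun x : ℝ => exp (x • a) * (a - b) * exp ((-x) • b) := by
    exact ((exp_continuous.comp (continuous_id.smul continuous_const)).mul
      continuous_const).mul
      (exp_continuous.comp (continuous_id.neg.smul continuous_const))
  have hFTC := integral_eq_sub_of_hasDerivAt (f := fun u : ℝ => exp (u • a) * exp ((-u) • b))
    (fun x _ => hg x) (hcont.intervalIntegrable 0 1)
  rw [hFTC]
  have hinv : exp (-b) * exp b = 1 := by
    rw [← exp_add_of_commute (Commute.neg_left (Commute.refl b)), neg_add_cancel, exp_zero]
  simp only [one_smul, zero_smul, neg_zero, exp_zero, mul_one]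
  rw [sub_mul, one_mul, show ((-1 : ℝ)) • b = -b by simp, mul_assoc, hinv, mul_one]

end DuhamelAux

/-- Derivative of `t ↦ exp (Ω t)` as an integral formula:
`d/dt exp(Ω(t)) = ∫_0^1 exp(x·Ω(t)) · Ω'(t) · exp((1-x)·Ω(t)) dx`. -/
theorem deriv_exp_eq_integral
    {𝔸 : Type*} [NormedRing 𝔸] [NormedAlgebra ℂ 𝔸] [CompleteSpace 𝔸]
    (Ω : ℝ → 𝔸) (hΩ : ContDiff ℝ 1 Ω) (t : ℝ) :
    HasDerivAt (fun s => exp (Ω s))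
      (∫ x in (0:ℝ)..1,
        exp (x • Ω t) * deriv Ω t * exp ((1 - x) • Ω t)) t := by
  letI : NormedAlgebra ℚ 𝔸 := NormedAlgebra.restrictScalars ℚ ℂ 𝔸
  set A := Ω t with hA
  set B := deriv Ω t with hB
  have hΩc : Continuous Ω := hΩ.continuous
  have hΩd : HasDerivAt Ω B t :=
    ((hΩ.differentiable one_ne_zero) t).hasDerivAt
  have hslope : Tendsto (slope Ω t) (𝓝[≠] t) (𝓝 B) :=
    hasDerivAt_iff_tendsto_slope.mp hΩd
  set F : ℝ → ℝ → 𝔸 := fun s x => exp (x • Ω s) * slope Ω t s * exp ((-x) • A) with hF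
  set f : ℝ → 𝔸 := fun x => exp (x • A) * B * exp ((-x) • A) with hf
  have hfcont : Continuous f :=
    ((exp_continuous.comp (continuous_id.smul continuous_const)).mul continuous_const).mul
      (exp_continuous.comp (continuous_id.neg.smul continuous_const))
  -- dominated convergence
  set C : ℝ := ((‖(1 : 𝔸)‖ + 1) * Real.exp (‖A‖ + 1)) * (‖B‖ + 1)
      * ((‖(1 : 𝔸)‖ + 1) * Real.exp (‖A‖ + 1)) with hC
  have hev1 : ∀ᶠ s in 𝓝[≠] t, ‖Ω s‖ ≤ ‖A‖ + 1 := by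
    have h := (hΩc.norm.tendsto t).eventually_lt_const (show ‖Ω t‖ < ‖A‖ + 1 by
      rw [← hA]; linarith)
    exact (h.filter_mono nhdsWithin_le_nhds).mono fun s hs => hs.le
  have hev2 : ∀ᶠ s in 𝓝[≠] t, ‖slope Ω t s‖ ≤ ‖B‖ + 1 := by
    have h := (hslope.norm).eventually_lt_const (show ‖B‖ < ‖B‖ + 1 by linarith)
    exact h.mono fun s hs => hs.le
  have hexp_bound : ∀ {y : 𝔸} {x : ℝ}, |x| ≤ 1 → ‖y‖ ≤ ‖A‖ + 1 →
      ‖exp (x • y)‖ ≤ (‖(1 : 𝔸)‖ + 1) * Real.exp (‖A‖ + 1) := by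
    intro y x hx hy
    refine (duhamel_norm_exp_le _).trans ?_
    have h1 : ‖x • y‖ ≤ ‖A‖ + 1 := by
      rw [norm_smul, Real.norm_eq_abs]
      calc |x| * ‖y‖ ≤ 1 * (‖A‖ + 1) := by
            apply mul_le_mul hx hy (norm_nonneg _) zero_le_one
        _ = ‖A‖ + 1 := one_mul _
    exact mul_le_mul_of_nonneg_left (Real.exp_le_exp.2 h1) (by positivity)
  have htend : Tendsto (fun s => ∫ x in (0:ℝ)..1, F s x) (𝓝[≠] t)
      (𝓝 (∫ x in (0:ℝ)..1, f x)) := by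
    refine tendsto_integral_filter_of_dominated_convergence (fun _ => C) ?_ ?_ ?_ ?_
    · refine Eventually.of_forall fun s => ?_
      exact (((exp_continuous.comp (continuous_id.smul continuous_const)).mul
        continuous_const).mul
        (exp_continuous.comp (continuous_id.neg.smul continuous_const))).aestronglyMeasurable
    · filter_upwards [hev1, hev2] with s h1 h2
      refine ae_of_all _ fun x hx => ?_
      rw [uIoc_of_le zero_le_one] at hx
      have hx1 : |x| ≤ 1 := abs_le.2 ⟨by linarith [hx.1], hx.2⟩
      have e1 : ‖exp (x • Ω s)‖ ≤ (‖(1 : 𝔸)‖ + 1) * Real.exp (‖A‖ + 1) :=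
        hexp_bound hx1 h1
      have e2 : ‖exp ((-x) • A)‖ ≤ (‖(1 : 𝔸)‖ + 1) * Real.exp (‖A‖ + 1) := by
        refine hexp_bound (by simpa using hx1) (by linarith)
      calc ‖F s x‖ ≤ ‖exp (x • Ω s) * slope Ω t s‖ * ‖exp ((-x) • A)‖ := norm_mul_le _ _
        _ ≤ ‖exp (x • Ω s)‖ * ‖slope Ω t s‖ * ‖exp ((-x) • A)‖ := by
            gcongr; exact norm_mul_le _ _
        _ ≤ ((‖(1 : 𝔸)‖ + 1) * Real.exp (‖A‖ + 1)) * (‖B‖ + 1)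
              * ((‖(1 : 𝔸)‖ + 1) * Real.exp (‖A‖ + 1)) := by
            exact mul_le_mul (mul_le_mul e1 h2 (norm_nonneg _) (by positivity)) e2
              (norm_nonneg _) (by positivity)
    · exact intervalIntegrable_const
    · refine ae_of_all _ fun x _ => ?_
      have t1 : Tendsto (fun s => exp (x • Ω s)) (𝓝[≠] t) (𝓝 (exp (x • A))) :=
        ((exp_continuous.comp (continuous_const.smul hΩc)).tendsto t).mono_left
          nhdsWithin_le_nhds
      exact (t1.mul hslope).mul tendsto_const_nhds
  -- rewrite the target integral
  have hfint : IntervalIntegrable f volume 0 1 := hfcont.intervalIntegrable 0 1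
  have htarget : (∫ x in (0:ℝ)..1, f x) * exp A
      = ∫ x in (0:ℝ)..1, exp (x • A) * B * exp ((1 - x) • A) := by
    have hcomp := ContinuousLinearMap.intervalIntegral_comp_comm
      ((ContinuousLinearMap.mul ℂ 𝔸).flip (exp A)) hfint
    simp only [ContinuousLinearMap.flip_apply, ContinuousLinearMap.mul_apply'] at hcomp
    rw [← hcomp]
    refine intervalIntegral.integral_congr fun x _ => ?_
    simp only [hf]
    rw [mul_assoc, mul_assoc, ← exp_add_of_commute ((Commute.refl A).smul_left (-x)),
      show (-x) • A + A = (1 - x) • A by rw [sub_smul, one_smul, neg_smul]; abel]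
    exact (mul_assoc _ _ _).symm
  -- slope identity
  rw [hasDerivAt_iff_tendsto_slope]
  have heq : ∀ᶠ s in 𝓝[≠] t, (∫ x in (0:ℝ)..1, F s x) * exp A
      = slope (fun s => exp (Ω s)) t s := by
    filter_upwards [self_mem_nhdsWithin] with s hs
    have hst : s ≠ t := hs
    rw [slope_def_module]
    rw [duhamel_exp_sub_exp (Ω s) A]
    rw [← smul_mul_assoc, ← intervalIntegral.integral_smul]
    congr 1
    refine intervalIntegral.integral_congr fun x _ => ?_
    simp only [hF]
    rw [slope_def_module, mul_smul_comm, smul_mul_assoc]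
  refine Tendsto.congr' heq ?_
  rw [← htarget]
  exact htend.mul tendsto_const_nhds
end

section
/- For continuous A : ℝ → M_d(ℂ), P₁(t)³ equals the sum of A(σ) over all six permutations σ of {1,2,3}, where A(i₁i₂i₃) = ∫_0^t dt₁∫_0^{t₁}dt₂∫_0^{t₂}dt₃ A(t_{i₁})A(t_{i₂})A(t_{i₃}). -/
attribute [local instance] Matrix.linftyOpNormedRing Matrix.linftyOpNormedAlgebra

/-- The time-ordered iterated integral
`A(i₁i₂i₃) = ∫_0^t dt₁∫_0^{t₁}dt₂∫_0^{t₂}dt₃ A(t_{i₁})A(t_{i₂})A(t_{i₃})`. -/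
noncomputable def orderedIntegral3 {d : ℕ} (A : ℝ → Matrix (Fin d) (Fin d) ℂ)
    (t : ℝ) (i₁ i₂ i₃ : Fin 3) : Matrix (Fin d) (Fin d) ℂ :=
  ∫ t₁ in (0:ℝ)..t, ∫ t₂ in (0:ℝ)..t₁, ∫ t₃ in (0:ℝ)..t₂,
    A (![t₁, t₂, t₃] i₁) * A (![t₁, t₂, t₃] i₂) * A (![t₁, t₂, t₃] i₃)

open MeasureTheory

namespace P1Aux

attribute [-instance] instTopologicalSpaceMatrix Matrix.instUniformSpace

variable {d : ℕ}

lemma integral_const_mul' (f : ℝ → Matrix (Fin d) (Fin d) ℂ) {a b : ℝ}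
    (hf : IntervalIntegrable f volume a b) (c : Matrix (Fin d) (Fin d) ℂ) :
    ∫ u in a..b, c * f u = c * ∫ u in a..b, f u := by
  simpa using (ContinuousLinearMap.mul ℝ (Matrix (Fin d) (Fin d) ℂ) c).intervalIntegral_comp_comm hf

lemma integral_mul_const' (f : ℝ → Matrix (Fin d) (Fin d) ℂ) {a b : ℝ}
    (hf : IntervalIntegrable f volume a b) (c : Matrix (Fin d) (Fin d) ℂ) :
    ∫ u in a..b, f u * c = (∫ u in a..b, f u) * c := by
  simpa using ((ContinuousLinearMap.mul ℝ (Matrix (Fin d) (Fin d) ℂ)).flip c).intervalIntegral_comp_comm hf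

lemma hasDerivAt_primitive {f : ℝ → Matrix (Fin d) (Fin d) ℂ} (hf : Continuous f) (x : ℝ) :
    HasDerivAt (fun u => ∫ s in (0:ℝ)..u, f s) (f x) x :=
  intervalIntegral.integral_hasDerivAt_right (hf.intervalIntegrable _ _)
    (hf.stronglyMeasurableAtFilter _ _) hf.continuousAt

lemma eq_of_hasDerivAt {F G D : ℝ → Matrix (Fin d) (Fin d) ℂ}
    (hF : ∀ x, HasDerivAt F (D x) x) (hG : ∀ x, HasDerivAt G (D x) x)
    (h0 : F 0 = G 0) (t : ℝ) : F t = G t := by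
  have h : ∀ x, HasDerivAt (fun y => F y - G y) 0 x := fun x => by
    have h' := (hF x).sub (hG x); rw [sub_self] at h'; exact h'
  have hconst : F t - G t = F 0 - G 0 :=
    is_const_of_deriv_eq_zero (𝕜 := ℝ)
      (fun x => (h x).differentiableAt) (fun x => (h x).deriv) t 0
  rw [h0, sub_self, sub_eq_zero] at hconst
  exact hconst

variable (A : ℝ → Matrix (Fin d) (Fin d) ℂ)

noncomputable def P (s : ℝ) : Matrix (Fin d) (Fin d) ℂ := ∫ u in (0:ℝ)..s, A u
noncomputable def Q (s : ℝ) : Matrix (Fin d) (Fin d) ℂ := ∫ u in (0:ℝ)..s, A u * P A u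
noncomputable def R (s : ℝ) : Matrix (Fin d) (Fin d) ℂ := ∫ u in (0:ℝ)..s, P A u * A u
noncomputable def T (c : Matrix (Fin d) (Fin d) ℂ) (s : ℝ) : Matrix (Fin d) (Fin d) ℂ :=
  ∫ u in (0:ℝ)..s, A u * c * P A u
noncomputable def T' (c : Matrix (Fin d) (Fin d) ℂ) (s : ℝ) : Matrix (Fin d) (Fin d) ℂ :=
  ∫ u in (0:ℝ)..s, P A u * (c * A u)

variable {A}

lemma hP (hA : Continuous A) (x : ℝ) : HasDerivAt (P A) (A x) x :=
  hasDerivAt_primitive hA x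

lemma contP (hA : Continuous A) : Continuous (P A) :=
  continuous_iff_continuousAt.2 fun x => (hP hA x).continuousAt

lemma hQ (hA : Continuous A) (x : ℝ) : HasDerivAt (Q A) (A x * P A x) x :=
  hasDerivAt_primitive (hA.mul (contP hA)) x

lemma hR (hA : Continuous A) (x : ℝ) : HasDerivAt (R A) (P A x * A x) x :=
  hasDerivAt_primitive ((contP hA).mul hA) x

lemma hT (hA : Continuous A) (c : Matrix (Fin d) (Fin d) ℂ) (x : ℝ) :
    HasDerivAt (T A c) (A x * c * P A x) x :=
  hasDerivAt_primitive ((hA.mul continuous_const).mul (contP hA)) x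

lemma hT' (hA : Continuous A) (c : Matrix (Fin d) (Fin d) ℂ) (x : ℝ) :
    HasDerivAt (T' A c) (P A x * (c * A x)) x :=
  hasDerivAt_primitive ((contP hA).mul (continuous_const.mul hA)) x

lemma QR (hA : Continuous A) (s : ℝ) : Q A s + R A s = P A s * P A s := by
  refine eq_of_hasDerivAt (D := fun x => A x * P A x + P A x * A x)
    (fun x => (hQ hA x).add (hR hA x)) (fun x => (hP hA x).mul (hP hA x)) ?_ s
  simp [Q, R, P]

lemma TT (hA : Continuous A) (c : Matrix (Fin d) (Fin d) ℂ) (s : ℝ) :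
    T A c s + T' A c s = P A s * c * P A s := by
  refine eq_of_hasDerivAt (G := fun y => P A y * c * P A y)
    (D := fun x => A x * c * P A x + P A x * (c * A x))
    (fun x => (hT hA c x).add (hT' hA c x)) (fun x => ?_) ?_ s
  · have h := ((hP hA x).mul_const c).mul (hP hA x)
    convert h using 1
    exacts [rfl, rfl, rfl, by simp [mul_assoc]]
  · simp [T, T', P]

lemma contTA (hA : Continuous A) : Continuous fun s => T A (A s) s := by
  have huc : Continuous (Function.uncurry fun (x : ℝ) (u : ℝ) => A u * A x * P A u) :=
    ((hA.comp continuous_snd).mul (hA.comp continuous_fst)).mul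
      ((contP hA).comp continuous_snd)
  exact intervalIntegral.continuous_parametric_intervalIntegral_of_continuous
    (f := fun (x : ℝ) (u : ℝ) => A u * A x * P A u) huc continuous_id

lemma contT'A (hA : Continuous A) : Continuous fun s => T' A (A s) s := by
  have huc : Continuous (Function.uncurry fun (x : ℝ) (u : ℝ) => P A u * (A x * A u)) :=
    ((contP hA).comp continuous_snd).mul
      ((hA.comp continuous_fst).mul (hA.comp continuous_snd))
  exact intervalIntegral.continuous_parametric_intervalIntegral_of_continuous
    (f := fun (x : ℝ) (u : ℝ) => P A u * (A x * A u)) huc continuous_id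

lemma oi012 (hA : Continuous A) (t : ℝ) :
    orderedIntegral3 A t 0 1 2 = ∫ s in (0:ℝ)..t, A s * Q A s := by
  unfold orderedIntegral3
  refine intervalIntegral.integral_congr fun t₁ _ => ?_
  simp only [Matrix.cons_val_zero, Matrix.cons_val_one, Matrix.head_cons,
    Matrix.cons_val_two, Matrix.tail_cons]
  have inner : ∀ t₂ : ℝ, (∫ t₃ in (0:ℝ)..t₂, A t₁ * A t₂ * A t₃)
      = A t₁ * (A t₂ * P A t₂) := fun t₂ => by
    rw [integral_const_mul' A (hA.intervalIntegrable _ _) (A t₁ * A t₂), mul_assoc]; rfl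
  rw [intervalIntegral.integral_congr (g := fun t₂ => A t₁ * (A t₂ * P A t₂))
    (fun t₂ _ => inner t₂),
    integral_const_mul' (fun u => A u * P A u) ((hA.mul (contP hA)).intervalIntegrable _ _) (A t₁)]
  rfl

lemma oi021 (hA : Continuous A) (t : ℝ) :
    orderedIntegral3 A t 0 2 1 = ∫ s in (0:ℝ)..t, A s * R A s := by
  unfold orderedIntegral3
  refine intervalIntegral.integral_congr fun t₁ _ => ?_
  simp only [Matrix.cons_val_zero, Matrix.cons_val_one, Matrix.head_cons,
    Matrix.cons_val_two, Matrix.tail_cons]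
  have inner : ∀ t₂ : ℝ, (∫ t₃ in (0:ℝ)..t₂, A t₁ * A t₃ * A t₂)
      = A t₁ * (P A t₂ * A t₂) := fun t₂ => by
    rw [integral_mul_const' (fun t₃ => A t₁ * A t₃)
        ((continuous_const.mul hA).intervalIntegrable _ _) (A t₂),
      integral_const_mul' A (hA.intervalIntegrable _ _) (A t₁), mul_assoc]
    rfl
  rw [intervalIntegral.integral_congr (g := fun t₂ => A t₁ * (P A t₂ * A t₂))
    (fun t₂ _ => inner t₂),
    integral_const_mul' (fun u => P A u * A u) (((contP hA).mul hA).intervalIntegrable _ _) (A t₁)]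
  rfl

lemma oi102 (hA : Continuous A) (t : ℝ) :
    orderedIntegral3 A t 1 0 2 = ∫ s in (0:ℝ)..t, T A (A s) s := by
  unfold orderedIntegral3
  refine intervalIntegral.integral_congr fun t₁ _ => ?_
  simp only [Matrix.cons_val_zero, Matrix.cons_val_one, Matrix.head_cons,
    Matrix.cons_val_two, Matrix.tail_cons]
  have inner : ∀ t₂ : ℝ, (∫ t₃ in (0:ℝ)..t₂, A t₂ * A t₁ * A t₃)
      = A t₂ * A t₁ * P A t₂ := fun t₂ => by
    rw [integral_const_mul' A (hA.intervalIntegrable _ _) (A t₂ * A t₁)]; rfl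
  exact intervalIntegral.integral_congr (g := fun t₂ => A t₂ * A t₁ * P A t₂)
    (fun t₂ _ => inner t₂)

lemma oi201 (hA : Continuous A) (t : ℝ) :
    orderedIntegral3 A t 2 0 1 = ∫ s in (0:ℝ)..t, T' A (A s) s := by
  unfold orderedIntegral3
  refine intervalIntegral.integral_congr fun t₁ _ => ?_
  simp only [Matrix.cons_val_zero, Matrix.cons_val_one, Matrix.head_cons,
    Matrix.cons_val_two, Matrix.tail_cons]
  have inner : ∀ t₂ : ℝ, (∫ t₃ in (0:ℝ)..t₂, A t₃ * A t₁ * A t₂)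
      = P A t₂ * (A t₁ * A t₂) := fun t₂ => by
    simp_rw [mul_assoc]
    rw [integral_mul_const' A (hA.intervalIntegrable _ _) (A t₁ * A t₂)]; rfl
  exact intervalIntegral.integral_congr (g := fun t₂ => P A t₂ * (A t₁ * A t₂))
    (fun t₂ _ => inner t₂)

lemma oi120 (hA : Continuous A) (t : ℝ) :
    orderedIntegral3 A t 1 2 0 = ∫ s in (0:ℝ)..t, Q A s * A s := by
  unfold orderedIntegral3
  refine intervalIntegral.integral_congr fun t₁ _ => ?_
  simp only [Matrix.cons_val_zero, Matrix.cons_val_one, Matrix.head_cons,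
    Matrix.cons_val_two, Matrix.tail_cons]
  have inner : ∀ t₂ : ℝ, (∫ t₃ in (0:ℝ)..t₂, A t₂ * A t₃ * A t₁)
      = (A t₂ * P A t₂) * A t₁ := fun t₂ => by
    rw [integral_mul_const' (fun t₃ => A t₂ * A t₃)
        ((continuous_const.mul hA).intervalIntegrable _ _) (A t₁),
      integral_const_mul' A (hA.intervalIntegrable _ _) (A t₂)]
    rfl
  rw [intervalIntegral.integral_congr (g := fun t₂ => (A t₂ * P A t₂) * A t₁)
    (fun t₂ _ => inner t₂),
    integral_mul_const' (fun u => A u * P A u) ((hA.mul (contP hA)).intervalIntegrable _ _) (A t₁)]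
  rfl

lemma oi210 (hA : Continuous A) (t : ℝ) :
    orderedIntegral3 A t 2 1 0 = ∫ s in (0:ℝ)..t, R A s * A s := by
  unfold orderedIntegral3
  refine intervalIntegral.integral_congr fun t₁ _ => ?_
  simp only [Matrix.cons_val_zero, Matrix.cons_val_one, Matrix.head_cons,
    Matrix.cons_val_two, Matrix.tail_cons]
  have inner : ∀ t₂ : ℝ, (∫ t₃ in (0:ℝ)..t₂, A t₃ * A t₂ * A t₁)
      = P A t₂ * (A t₂ * A t₁) := fun t₂ => by
    simp_rw [mul_assoc]
    rw [integral_mul_const' A (hA.intervalIntegrable _ _) (A t₂ * A t₁)]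
    rfl
  rw [intervalIntegral.integral_congr (g := fun t₂ => P A t₂ * (A t₂ * A t₁))
    (fun t₂ _ => inner t₂),
    intervalIntegral.integral_congr (g := fun t₂ => (P A t₂ * A t₂) * A t₁)
      (fun t₂ _ => (mul_assoc _ _ _).symm),
    integral_mul_const' (fun u => P A u * A u) (((contP hA).mul hA).intervalIntegrable _ _) (A t₁)]
  rfl

lemma contQ (hA : Continuous A) : Continuous (Q A) :=
  continuous_iff_continuousAt.2 fun x => (hQ hA x).continuousAt

lemma contR (hA : Continuous A) : Continuous (R A) :=
  continuous_iff_continuousAt.2 fun x => (hR hA x).continuousAt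

end P1Aux

open P1Aux in
/-- `P₁(t)³` is the sum of `A(σ)` over all six permutations of `{1,2,3}`. -/
theorem P1_cubed_eq_sum_ordered
    {d : ℕ} (A : ℝ → Matrix (Fin d) (Fin d) ℂ)
    (hA : Continuous A) (t : ℝ) (ht : 0 ≤ t) :
    (∫ s in (0:ℝ)..t, A s) ^ 3
      = orderedIntegral3 A t 0 1 2 + orderedIntegral3 A t 0 2 1
        + orderedIntegral3 A t 1 0 2 + orderedIntegral3 A t 1 2 0
        + orderedIntegral3 A t 2 0 1 + orderedIntegral3 A t 2 1 0 := by
  letI : TopologicalSpace (Matrix (Fin d) (Fin d) ℂ) :=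
    @UniformSpace.toTopologicalSpace _ PseudoMetricSpace.toUniformSpace
  have cP := contP hA
  have h1 : IntervalIntegrable (fun s => A s * Q A s) volume 0 t :=
    (hA.mul (contQ hA)).intervalIntegrable _ _
  have h2 : IntervalIntegrable (fun s => A s * R A s) volume 0 t :=
    (hA.mul (contR hA)).intervalIntegrable _ _
  have h3 : IntervalIntegrable (fun s => T A (A s) s) volume 0 t :=
    (contTA hA).intervalIntegrable _ _
  have h4 : IntervalIntegrable (fun s => Q A s * A s) volume 0 t :=
    ((contQ hA).mul hA).intervalIntegrable _ _
  have h5 : IntervalIntegrable (fun s => T' A (A s) s) volume 0 t :=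
    (contT'A hA).intervalIntegrable _ _
  have h6 : IntervalIntegrable (fun s => R A s * A s) volume 0 t :=
    ((contR hA).mul hA).intervalIntegrable _ _
  rw [oi012 hA t, oi021 hA t, oi102 hA t, oi120 hA t, oi201 hA t, oi210 hA t,
    ← intervalIntegral.integral_add h1 h2, ← intervalIntegral.integral_add (h1.add h2) h3,
    ← intervalIntegral.integral_add ((h1.add h2).add h3) h4,
    ← intervalIntegral.integral_add (((h1.add h2).add h3).add h4) h5,
    ← intervalIntegral.integral_add ((((h1.add h2).add h3).add h4).add h5) h6]
  have hcongr : ∀ s : ℝ,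
      A s * Q A s + A s * R A s + T A (A s) s + Q A s * A s + T' A (A s) s + R A s * A s
      = A s * (P A s * P A s) + P A s * A s * P A s + P A s * P A s * A s := by
    intro s
    have e1 := QR hA s
    have e2 := TT hA (A s) s
    calc A s * Q A s + A s * R A s + T A (A s) s + Q A s * A s + T' A (A s) s + R A s * A s
        = A s * (Q A s + R A s) + (T A (A s) s + T' A (A s) s) + (Q A s + R A s) * A s := by
          rw [mul_add, add_mul]; abel
      _ = A s * (P A s * P A s) + P A s * A s * P A s + P A s * P A s * A s := by
          rw [e1, e2]
  rw [intervalIntegral.integral_congr (fun s _ => hcongr s)]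
  have hD : Continuous (fun s => A s * (P A s * P A s) + P A s * A s * P A s
      + P A s * P A s * A s) :=
    ((hA.mul (cP.mul cP)).add ((cP.mul hA).mul cP)).add ((cP.mul cP).mul hA)
  have hF : ∀ x : ℝ, HasDerivAt (fun s => P A s * P A s * P A s)
      (A x * (P A x * P A x) + P A x * A x * P A x + P A x * P A x * A x) x := by
    intro x
    have h := ((hP hA x).mul (hP hA x)).mul (hP hA x)
    convert h using 1
    exacts [rfl, rfl, rfl, by simp only [Pi.mul_apply]; noncomm_ring]
  have key := eq_of_hasDerivAt hF (fun x => hasDerivAt_primitive hD x) (by simp [P]) t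
  rw [show ((∫ s in (0:ℝ)..t, A s) ^ 3) = P A t * P A t * P A t from by
    rw [pow_succ, pow_two]; rfl]
  exact key
end

section
/- The third Wilcox exponent W₃ = P₃ − P₁P₂ + ⅓P₁³ equals ⅓A(123) + ⅓A(132) − ⅔A(213) + ⅓A(231) − ⅔A(312) + ⅓A(321) in terms of time-ordered iterated integrals. -/
attribute [local instance] Matrix.linftyOpNormedRing Matrix.linftyOpNormedAlgebra

section aux
variable {d : ℕ}
local notation "M" => Matrix (Fin d) (Fin d) ℂ
instance instPMz : TopologicalSpace.PseudoMetrizableSpace M := PseudoEMetricSpace.pseudoMetrizableSpace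
noncomputable instance instENz : ENormedAddMonoid M := NormedAddGroup.toENormedAddMonoid

lemma hasDerivAt_primitive (f : ℝ → M) (hf : Continuous f) (t : ℝ) :
    HasDerivAt (fun u => ∫ s in (0:ℝ)..u, f s) (f t) t :=
  intervalIntegral.integral_hasDerivAt_right (hf.intervalIntegrable _ _)
    (hf.stronglyMeasurableAtFilter _ _) hf.continuousAt

lemma cont_primitive (f : ℝ → M) (hf : Continuous f) :
    Continuous fun u => ∫ s in (0:ℝ)..u, f s :=
  intervalIntegral.continuous_primitive (fun a b => hf.intervalIntegrable a b) 0

lemma integral_mul_const' (f : ℝ → M) (hf : Continuous f) (a b : ℝ) (C : M) :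
    ∫ s in a..b, f s * C = (∫ s in a..b, f s) * C := by
  simpa using ((ContinuousLinearMap.mul ℂ M).flip C).intervalIntegral_comp_comm
    (hf.intervalIntegrable a b)

lemma const_mul_integral' (f : ℝ → M) (hf : Continuous f) (a b : ℝ) (C : M) :
    ∫ s in a..b, C * f s = C * ∫ s in a..b, f s := by
  simpa using (ContinuousLinearMap.mul ℂ M C).intervalIntegral_comp_comm
    (hf.intervalIntegrable a b)

lemma master (f g : ℝ → M) (hf : Continuous f) (hg : Continuous g) (t : ℝ) :
    (∫ s in (0:ℝ)..t, f s) * (∫ s in (0:ℝ)..t, g s)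
      = (∫ s in (0:ℝ)..t, f s * ∫ u in (0:ℝ)..s, g u)
        + ∫ s in (0:ℝ)..t, (∫ u in (0:ℝ)..s, f u) * g s := by
  have cF := cont_primitive f hf
  have cG := cont_primitive g hg
  have h1 : IntervalIntegrable (fun s => f s * ∫ u in (0:ℝ)..s, g u) MeasureTheory.volume 0 t :=
    (hf.mul cG).intervalIntegrable 0 t
  have h2 : IntervalIntegrable (fun s => (∫ u in (0:ℝ)..s, f u) * g s) MeasureTheory.volume 0 t :=
    (cF.mul hg).intervalIntegrable 0 t
  rw [← intervalIntegral.integral_add h1 h2]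
  have hd : ∀ x ∈ Set.uIcc (0:ℝ) t,
      HasDerivAt (fun u => (∫ s in (0:ℝ)..u, f s) * ∫ s in (0:ℝ)..u, g s)
        ((fun s => f s * (∫ u in (0:ℝ)..s, g u) + (∫ u in (0:ℝ)..s, f u) * g s) x) x :=
    fun x _ => (hasDerivAt_primitive f hf x).mul (hasDerivAt_primitive g hg x)
  have := intervalIntegral.integral_eq_sub_of_hasDerivAt hd (h1.add h2)
  simpa using this.symm

lemma eq_of_deriv (f g : ℝ → M) (d' : ℝ → M) (hf : ∀ x, HasDerivAt f (d' x) x)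
    (hg : ∀ x, HasDerivAt g (d' x) x) (h0 : f 0 = g 0) (t : ℝ) : f t = g t := by
  have key : ∀ x y : ℝ, f x - g x = f y - g y := fun x y =>
    is_const_of_deriv_eq_zero (f := fun x => f x - g x)
      (fun x => ((hf x).sub (hg x)).differentiableAt)
      (fun x => by exact ((hf x).sub (hg x)).deriv.trans (sub_self _)) x y
  have h := key t 0
  rw [h0, sub_self, sub_eq_zero] at h
  exact h

lemma contG (B : ℝ → ℝ → ℝ → M) (hB : Continuous fun p : ℝ × ℝ × ℝ => B p.1 p.2.1 p.2.2) :
    Continuous fun t₁ => ∫ t₂ in (0:ℝ)..t₁, ∫ t₃ in (0:ℝ)..t₂, B t₁ t₂ t₃ := by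
  apply intervalIntegral.continuous_parametric_intervalIntegral_of_continuous ?_ continuous_id
  apply intervalIntegral.continuous_parametric_intervalIntegral_of_continuous (X := ℝ × ℝ)
    ?_ continuous_snd
  exact hB.comp ((continuous_fst.fst).prodMk ((continuous_fst.snd).prodMk continuous_snd))

end aux

section main
variable {d : ℕ}
local notation "M" => Matrix (Fin d) (Fin d) ℂ

lemma integral_congr' {f g : ℝ → M} (a b : ℝ) (h : ∀ s, f s = g s) :
    ∫ s in a..b, f s = ∫ s in a..b, g s :=
  intervalIntegral.integral_congr fun s _ => h s

/-- `G213 x + G312 x = (P x * A x) * P x`. -/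
lemma middle_sum (A : ℝ → M) (hA : Continuous A) (x : ℝ) :
    (∫ t₂ in (0:ℝ)..x, ∫ t₃ in (0:ℝ)..t₂, A t₂ * A x * A t₃)
      + (∫ t₂ in (0:ℝ)..x, ∫ t₃ in (0:ℝ)..t₂, A t₃ * A x * A t₂)
      = ((∫ s in (0:ℝ)..x, A s) * A x) * ∫ s in (0:ℝ)..x, A s := by
  have cP := cont_primitive A hA
  have hm := master (fun s => A s * A x) A (hA.mul continuous_const) hA x
  rw [integral_mul_const' A hA 0 x (A x)] at hm
  have e1 : ∀ s : ℝ, (∫ t₃ in (0:ℝ)..s, A s * A x * A t₃)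
      = (fun s => (A s * A x) * ∫ u in (0:ℝ)..s, A u) s := fun s =>
    const_mul_integral' A hA 0 s (A s * A x)
  have e2 : ∀ s : ℝ, (∫ t₃ in (0:ℝ)..s, A t₃ * A x * A s)
      = (fun s => (∫ u in (0:ℝ)..s, A u * A x) * A s) s := fun s => by
    simp_rw [mul_assoc]
    rw [integral_mul_const' A hA 0 s (A x * A s),
      integral_mul_const' A hA 0 s (A x), mul_assoc]
  rw [integral_congr' 0 x e1, integral_congr' 0 x e2, ← hm]

lemma propI (A : ℝ → M) (hA : Continuous A) (t : ℝ) :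
    (∫ s in (0:ℝ)..t, A s) * (∫ t₁ in (0:ℝ)..t, ∫ t₂ in (0:ℝ)..t₁, A t₁ * A t₂)
      = orderedIntegral3 A t 0 1 2 + orderedIntegral3 A t 1 0 2
        + orderedIntegral3 A t 2 0 1 := by
  have cP := cont_primitive A hA
  have cg2 : Continuous fun u => ∫ t₂ in (0:ℝ)..u, A u * A t₂ := by
    apply intervalIntegral.continuous_parametric_intervalIntegral_of_continuous ?_ continuous_id
    exact (hA.comp continuous_fst).mul (hA.comp continuous_snd)
  have c123 := contG (fun t₁ t₂ t₃ => A t₁ * A t₂ * A t₃) (by fun_prop)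
  have c213 := contG (fun t₁ t₂ t₃ => A t₂ * A t₁ * A t₃) (by fun_prop)
  have c312 := contG (fun t₁ t₂ t₃ => A t₃ * A t₁ * A t₂) (by fun_prop)
  refine eq_of_deriv
    (fun u => (∫ s in (0:ℝ)..u, A s) * (∫ t₁ in (0:ℝ)..u, ∫ t₂ in (0:ℝ)..t₁, A t₁ * A t₂))
    (fun u => orderedIntegral3 A u 0 1 2 + orderedIntegral3 A u 1 0 2
      + orderedIntegral3 A u 2 0 1)
    (fun x => A x * (∫ t₁ in (0:ℝ)..x, ∫ t₂ in (0:ℝ)..t₁, A t₁ * A t₂)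
      + (∫ s in (0:ℝ)..x, A s) * (A x * ∫ s in (0:ℝ)..x, A s)) ?_ ?_ (by simp [orderedIntegral3]) t
  · intro x
    have hP2 : HasDerivAt (fun u => ∫ t₁ in (0:ℝ)..u, ∫ t₂ in (0:ℝ)..t₁, A t₁ * A t₂)
        (A x * ∫ s in (0:ℝ)..x, A s) x :=
      const_mul_integral' A hA 0 x (A x) ▸
        hasDerivAt_primitive (fun u => ∫ t₂ in (0:ℝ)..u, A u * A t₂) cg2 x
    exact (hasDerivAt_primitive A hA x).mul hP2
  · intro x
    have h1 : HasDerivAt (fun u => orderedIntegral3 A u 0 1 2)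
        (∫ t₂ in (0:ℝ)..x, ∫ t₃ in (0:ℝ)..t₂, A x * A t₂ * A t₃) x :=
      hasDerivAt_primitive
        (fun t₁ => ∫ t₂ in (0:ℝ)..t₁, ∫ t₃ in (0:ℝ)..t₂, A t₁ * A t₂ * A t₃) c123 x
    have h2 : HasDerivAt (fun u => orderedIntegral3 A u 1 0 2)
        (∫ t₂ in (0:ℝ)..x, ∫ t₃ in (0:ℝ)..t₂, A t₂ * A x * A t₃) x :=
      hasDerivAt_primitive
        (fun t₁ => ∫ t₂ in (0:ℝ)..t₁, ∫ t₃ in (0:ℝ)..t₂, A t₂ * A t₁ * A t₃) c213 x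
    have h3 : HasDerivAt (fun u => orderedIntegral3 A u 2 0 1)
        (∫ t₂ in (0:ℝ)..x, ∫ t₃ in (0:ℝ)..t₂, A t₃ * A x * A t₂) x :=
      hasDerivAt_primitive
        (fun t₁ => ∫ t₂ in (0:ℝ)..t₁, ∫ t₃ in (0:ℝ)..t₂, A t₃ * A t₁ * A t₂) c312 x
    have hsum := (h1.add h2).add h3
    have e123 : (∫ t₂ in (0:ℝ)..x, ∫ t₃ in (0:ℝ)..t₂, A x * A t₂ * A t₃)
        = A x * ∫ t₁ in (0:ℝ)..x, ∫ t₂ in (0:ℝ)..t₁, A t₁ * A t₂ := by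
      have inner : ∀ s : ℝ, (∫ t₃ in (0:ℝ)..s, A x * A s * A t₃)
          = (fun s => A x * ∫ t₃ in (0:ℝ)..s, A s * A t₃) s := fun s => by
        simp_rw [mul_assoc]
        rw [const_mul_integral' (fun u => A s * A u) (continuous_const.mul hA) 0 s (A x)]
      rw [integral_congr' 0 x inner,
        const_mul_integral' (fun u => ∫ t₂ in (0:ℝ)..u, A u * A t₂) cg2 0 x (A x)]
    have emid := middle_sum A hA x
    rw [e123] at hsum
    have efin : A x * (∫ t₁ in (0:ℝ)..x, ∫ t₂ in (0:ℝ)..t₁, A t₁ * A t₂)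
          + (∫ t₂ in (0:ℝ)..x, ∫ t₃ in (0:ℝ)..t₂, A t₂ * A x * A t₃)
          + (∫ t₂ in (0:ℝ)..x, ∫ t₃ in (0:ℝ)..t₂, A t₃ * A x * A t₂)
        = A x * (∫ t₁ in (0:ℝ)..x, ∫ t₂ in (0:ℝ)..t₁, A t₁ * A t₂)
          + (∫ s in (0:ℝ)..x, A s) * (A x * ∫ s in (0:ℝ)..x, A s) := by
      rw [add_assoc, emid, mul_assoc]
    rw [efin] at hsum
    exact hsum


lemma propII (A : ℝ → M) (hA : Continuous A) (t : ℝ) :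
    (∫ s in (0:ℝ)..t, A s) ^ 3
      = orderedIntegral3 A t 0 1 2 + orderedIntegral3 A t 0 2 1
        + orderedIntegral3 A t 1 0 2 + orderedIntegral3 A t 1 2 0
        + orderedIntegral3 A t 2 0 1 + orderedIntegral3 A t 2 1 0 := by
  have cP := cont_primitive A hA
  have c123 := contG (fun t₁ t₂ t₃ => A t₁ * A t₂ * A t₃) (by fun_prop)
  have c132 := contG (fun t₁ t₂ t₃ => A t₁ * A t₃ * A t₂) (by fun_prop)
  have c213 := contG (fun t₁ t₂ t₃ => A t₂ * A t₁ * A t₃) (by fun_prop)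
  have c231 := contG (fun t₁ t₂ t₃ => A t₂ * A t₃ * A t₁) (by fun_prop)
  have c312 := contG (fun t₁ t₂ t₃ => A t₃ * A t₁ * A t₂) (by fun_prop)
  have c321 := contG (fun t₁ t₂ t₃ => A t₃ * A t₂ * A t₁) (by fun_prop)
  refine eq_of_deriv
    (fun u => (∫ s in (0:ℝ)..u, A s) ^ 3)
    (fun u => orderedIntegral3 A u 0 1 2 + orderedIntegral3 A u 0 2 1
      + orderedIntegral3 A u 1 0 2 + orderedIntegral3 A u 1 2 0
      + orderedIntegral3 A u 2 0 1 + orderedIntegral3 A u 2 1 0)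
    (fun x => (A x * (∫ s in (0:ℝ)..x, A s) + (∫ s in (0:ℝ)..x, A s) * A x)
        * (∫ s in (0:ℝ)..x, A s)
      + ((∫ s in (0:ℝ)..x, A s) * (∫ s in (0:ℝ)..x, A s)) * A x) ?_ ?_
    (by simp [orderedIntegral3]) t
  · intro x
    have h := hasDerivAt_primitive A hA x
    have hfun : (fun u => (∫ s in (0:ℝ)..u, A s) ^ 3)
        = fun u => ((∫ s in (0:ℝ)..u, A s) * (∫ s in (0:ℝ)..u, A s))
            * (∫ s in (0:ℝ)..u, A s) :=
      funext fun u => by rw [pow_succ, pow_two]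
    rw [hfun]
    exact (h.mul h).mul h
  · intro x
    have h1 : HasDerivAt (fun u => orderedIntegral3 A u 0 1 2)
        (∫ t₂ in (0:ℝ)..x, ∫ t₃ in (0:ℝ)..t₂, A x * A t₂ * A t₃) x :=
      hasDerivAt_primitive
        (fun t₁ => ∫ t₂ in (0:ℝ)..t₁, ∫ t₃ in (0:ℝ)..t₂, A t₁ * A t₂ * A t₃) c123 x
    have h2 : HasDerivAt (fun u => orderedIntegral3 A u 0 2 1)
        (∫ t₂ in (0:ℝ)..x, ∫ t₃ in (0:ℝ)..t₂, A x * A t₃ * A t₂) x :=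
      hasDerivAt_primitive
        (fun t₁ => ∫ t₂ in (0:ℝ)..t₁, ∫ t₃ in (0:ℝ)..t₂, A t₁ * A t₃ * A t₂) c132 x
    have h3 : HasDerivAt (fun u => orderedIntegral3 A u 1 0 2)
        (∫ t₂ in (0:ℝ)..x, ∫ t₃ in (0:ℝ)..t₂, A t₂ * A x * A t₃) x :=
      hasDerivAt_primitive
        (fun t₁ => ∫ t₂ in (0:ℝ)..t₁, ∫ t₃ in (0:ℝ)..t₂, A t₂ * A t₁ * A t₃) c213 x
    have h4 : HasDerivAt (fun u => orderedIntegral3 A u 1 2 0)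
        (∫ t₂ in (0:ℝ)..x, ∫ t₃ in (0:ℝ)..t₂, A t₂ * A t₃ * A x) x :=
      hasDerivAt_primitive
        (fun t₁ => ∫ t₂ in (0:ℝ)..t₁, ∫ t₃ in (0:ℝ)..t₂, A t₂ * A t₃ * A t₁) c231 x
    have h5 : HasDerivAt (fun u => orderedIntegral3 A u 2 0 1)
        (∫ t₂ in (0:ℝ)..x, ∫ t₃ in (0:ℝ)..t₂, A t₃ * A x * A t₂) x :=
      hasDerivAt_primitive
        (fun t₁ => ∫ t₂ in (0:ℝ)..t₁, ∫ t₃ in (0:ℝ)..t₂, A t₃ * A t₁ * A t₂) c312 x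
    have h6 : HasDerivAt (fun u => orderedIntegral3 A u 2 1 0)
        (∫ t₂ in (0:ℝ)..x, ∫ t₃ in (0:ℝ)..t₂, A t₃ * A t₂ * A x) x :=
      hasDerivAt_primitive
        (fun t₁ => ∫ t₂ in (0:ℝ)..t₁, ∫ t₃ in (0:ℝ)..t₂, A t₃ * A t₂ * A t₁) c321 x
    have hsum := ((((h1.add h2).add h3).add h4).add h5).add h6
    have e123 : (∫ t₂ in (0:ℝ)..x, ∫ t₃ in (0:ℝ)..t₂, A x * A t₂ * A t₃)
        = A x * ∫ s in (0:ℝ)..x, A s * ∫ u in (0:ℝ)..s, A u := by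
      have inner : ∀ s : ℝ, (∫ t₃ in (0:ℝ)..s, A x * A s * A t₃)
          = (fun s => A x * (A s * ∫ u in (0:ℝ)..s, A u)) s := fun s => by
        rw [const_mul_integral' A hA 0 s (A x * A s), mul_assoc]
      rw [integral_congr' 0 x inner,
        const_mul_integral' (fun s => A s * ∫ u in (0:ℝ)..s, A u) (hA.mul cP) 0 x (A x)]
    have e132 : (∫ t₂ in (0:ℝ)..x, ∫ t₃ in (0:ℝ)..t₂, A x * A t₃ * A t₂)
        = A x * ∫ s in (0:ℝ)..x, (∫ u in (0:ℝ)..s, A u) * A s := by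
      have inner : ∀ s : ℝ, (∫ t₃ in (0:ℝ)..s, A x * A t₃ * A s)
          = (fun s => A x * ((∫ u in (0:ℝ)..s, A u) * A s)) s := fun s => by
        simp_rw [mul_assoc]
        rw [const_mul_integral' (fun u => A u * A s) (hA.mul continuous_const) 0 s (A x),
          integral_mul_const' A hA 0 s (A s)]
      rw [integral_congr' 0 x inner,
        const_mul_integral' (fun s => (∫ u in (0:ℝ)..s, A u) * A s) (cP.mul hA) 0 x (A x)]
    have e231 : (∫ t₂ in (0:ℝ)..x, ∫ t₃ in (0:ℝ)..t₂, A t₂ * A t₃ * A x)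
        = (∫ s in (0:ℝ)..x, A s * ∫ u in (0:ℝ)..s, A u) * A x := by
      have inner : ∀ s : ℝ, (∫ t₃ in (0:ℝ)..s, A s * A t₃ * A x)
          = (fun s => (A s * ∫ u in (0:ℝ)..s, A u) * A x) s := fun s => by
        rw [integral_mul_const' (fun u => A s * A u) (continuous_const.mul hA) 0 s (A x),
          const_mul_integral' A hA 0 s (A s)]
      rw [integral_congr' 0 x inner,
        integral_mul_const' (fun s => A s * ∫ u in (0:ℝ)..s, A u) (hA.mul cP) 0 x (A x)]
    have e321 : (∫ t₂ in (0:ℝ)..x, ∫ t₃ in (0:ℝ)..t₂, A t₃ * A t₂ * A x)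
        = (∫ s in (0:ℝ)..x, (∫ u in (0:ℝ)..s, A u) * A s) * A x := by
      have inner : ∀ s : ℝ, (∫ t₃ in (0:ℝ)..s, A t₃ * A s * A x)
          = (fun s => ((∫ u in (0:ℝ)..s, A u) * A s) * A x) s := fun s => by
        simp_rw [mul_assoc]
        rw [integral_mul_const' A hA 0 s (A s * A x)]
      rw [integral_congr' 0 x inner,
        integral_mul_const' (fun s => (∫ u in (0:ℝ)..s, A u) * A s) (cP.mul hA) 0 x (A x)]
    have emid := middle_sum A hA x
    have hPQ := master A A hA hA x
    rw [e123, e132, e231, e321] at hsum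
    have veq : A x * (∫ s in (0:ℝ)..x, A s * ∫ u in (0:ℝ)..s, A u)
          + A x * (∫ s in (0:ℝ)..x, (∫ u in (0:ℝ)..s, A u) * A s)
          + (∫ t₂ in (0:ℝ)..x, ∫ t₃ in (0:ℝ)..t₂, A t₂ * A x * A t₃)
          + (∫ s in (0:ℝ)..x, A s * ∫ u in (0:ℝ)..s, A u) * A x
          + (∫ t₂ in (0:ℝ)..x, ∫ t₃ in (0:ℝ)..t₂, A t₃ * A x * A t₂)
          + (∫ s in (0:ℝ)..x, (∫ u in (0:ℝ)..s, A u) * A s) * A x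
        = (A x * (∫ s in (0:ℝ)..x, A s) + (∫ s in (0:ℝ)..x, A s) * A x)
            * (∫ s in (0:ℝ)..x, A s)
          + ((∫ s in (0:ℝ)..x, A s) * (∫ s in (0:ℝ)..x, A s)) * A x := by
      rw [show (∫ t₂ in (0:ℝ)..x, ∫ t₃ in (0:ℝ)..t₂, A t₂ * A x * A t₃)
          = ((∫ s in (0:ℝ)..x, A s) * A x) * (∫ s in (0:ℝ)..x, A s)
            - (∫ t₂ in (0:ℝ)..x, ∫ t₃ in (0:ℝ)..t₂, A t₃ * A x * A t₂)
          from eq_sub_of_add_eq emid]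
      rw [show (∫ s in (0:ℝ)..x, A s * ∫ u in (0:ℝ)..s, A u)
          = (∫ s in (0:ℝ)..x, A s) * (∫ s in (0:ℝ)..x, A s)
            - (∫ s in (0:ℝ)..x, (∫ u in (0:ℝ)..s, A u) * A s)
          from eq_sub_of_add_eq hPQ.symm]
      noncomm_ring
    rw [veq] at hsum
    exact hsum

end main

/-- `W₃ = P₃ − P₁P₂ + ⅓P₁³ = ⅓A(123) + ⅓A(132) − ⅔A(213) + ⅓A(231) − ⅔A(312) + ⅓A(321)`. -/
theorem wilcox_W3_eq_ordered
    {d : ℕ} (A : ℝ → Matrix (Fin d) (Fin d) ℂ)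
    (hA : Continuous A) (t : ℝ) (ht : 0 ≤ t) :
    orderedIntegral3 A t 0 1 2
        - (∫ s in (0:ℝ)..t, A s) *
            (∫ t₁ in (0:ℝ)..t, ∫ t₂ in (0:ℝ)..t₁, A t₁ * A t₂)
        + ((1:ℂ)/3) • (∫ s in (0:ℝ)..t, A s) ^ 3
      = ((1:ℂ)/3) • orderedIntegral3 A t 0 1 2
        + ((1:ℂ)/3) • orderedIntegral3 A t 0 2 1
        - ((2:ℂ)/3) • orderedIntegral3 A t 1 0 2
        + ((1:ℂ)/3) • orderedIntegral3 A t 1 2 0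
        - ((2:ℂ)/3) • orderedIntegral3 A t 2 0 1
        + ((1:ℂ)/3) • orderedIntegral3 A t 2 1 0 := by
  rw [propI A hA t, propII A hA t]
  module
end
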